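/- Let a ∈ ℤ[X] and let s ∈ ℤ[X] be a finite product of polynomials of the form X^n − X with integers n ≥ 2. If for every prime power q the integer s(q) divides a(q), then s divides a in ℤ[X]; that is, the rational function a/s is a polynomial with integer coefficients. -/

import Mathlib

open Polynomial

open Filter in
private lemma monic_eventually_pos (f : Polynomial ℤ) (hf : f.Monic) :
    ∀ᶠ x : ℤ in atTop, 0 < f.eval x := by
  by_cases hd : 0 < f.degree
  · have hg : Tendsto (fun x : ℝ => (f.map (Int.castRingHom ℝ)).eval x) atTop atTop := by
      apply Polynomial.tendsto_atTop_of_leadingCoeff_nonneg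
      · rwa [hf.degree_map]
      · rw [(hf.map (Int.castRingHom ℝ)).leadingCoeff]; norm_num
    have := (hg.comp tendsto_intCast_atTop_atTop).eventually_gt_atTop 0
    filter_upwards [this] with x hx
    rw [Function.comp, Polynomial.eval_intCast_map, eq_intCast] at hx
    exact_mod_cast hx
  · have : f = 1 := hf.degree_le_zero_iff_eq_one.mp (not_lt.mp hd)
    simp [this]

/-- Let `a ∈ ℤ[X]` and let `s ∈ ℤ[X]` be a finite product of polynomials of the form
`X^n − X` with `n ≥ 2`. If `s(q)` divides `a(q)` for every prime power `q`, then `s`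
divides `a` in `ℤ[X]`. -/
theorem stmt_19 (a s : Polynomial ℤ)
    (hs : ∃ l : Multiset ℕ, (∀ n ∈ l, 2 ≤ n) ∧
      s = (l.map (fun n => (X : Polynomial ℤ) ^ n - X)).prod)
    (h : ∀ p m : ℕ, p.Prime → 1 ≤ m →
      s.eval ((p : ℤ) ^ m) ∣ a.eval ((p : ℤ) ^ m)) :
    s ∣ a := by
  obtain ⟨l, hl, hs_def⟩ := hs
  have hsm : s.Monic := by
    rw [hs_def]
    exact monic_multiset_prod_of_monic l _ fun n hn =>
      (monic_X_pow n).sub_of_left (by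
        rw [degree_X, degree_X_pow]
        exact_mod_cast hl n hn)
  -- divisibility of the remainder at primes
  have hdvd : ∀ p : ℕ, p.Prime → s.eval (p : ℤ) ∣ (a %ₘ s).eval (p : ℤ) := by
    intro p hp
    have h1 := h p 1 hp le_rfl
    rw [pow_one] at h1
    have key := congrArg (eval (p : ℤ)) (modByMonic_add_div a s)
    rw [eval_add, eval_mul] at key
    have heq : (a %ₘ s).eval (p : ℤ) =
        a.eval (p : ℤ) - s.eval (p : ℤ) * (a /ₘ s).eval (p : ℤ) := by linarith
    rw [heq]
    exact dvd_sub h1 (Dvd.intro _ rfl)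
  -- the remainder is zero
  have hr0 : a %ₘ s = 0 := by
    have hdr : (a %ₘ s).degree < s.degree := degree_modByMonic_lt a hsm
    have h1 := monic_eventually_pos (s - a %ₘ s) (hsm.sub_of_left hdr)
    have h2 := monic_eventually_pos (s + a %ₘ s) (hsm.add_of_left hdr)
    obtain ⟨N, hN⟩ := Filter.eventually_atTop.mp (h1.and h2)
    apply Polynomial.eq_zero_of_infinite_isRoot
    apply Set.infinite_of_forall_exists_gt
    intro M
    obtain ⟨p, hpM, hp⟩ := Nat.exists_infinite_primes (max M.toNat N.toNat + 1)
    have hpN : N ≤ (p : ℤ) := by omega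
    have hpM' : M < (p : ℤ) := by omega
    obtain ⟨hpos1, hpos2⟩ := hN (p : ℤ) hpN
    rw [eval_sub] at hpos1
    rw [eval_add] at hpos2
    have habs : |(a %ₘ s).eval (p : ℤ)| < s.eval (p : ℤ) :=
      abs_lt.mpr ⟨by linarith, by linarith⟩
    have hroot : (a %ₘ s).IsRoot (p : ℤ) := by
      by_contra hne
      have hpos : 0 < |(a %ₘ s).eval (p : ℤ)| := abs_pos.mpr hne
      have hle := Int.le_of_dvd hpos ((dvd_abs _ _).mpr (hdvd p hp))
      linarith
    exact ⟨(p : ℤ), hroot, hpM'⟩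
  rwa [← Polynomial.modByMonic_eq_zero_iff_dvd hsm]
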